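/- arXiv:1510.00404 — 4 statements merged into one kernel-verified Lean document; each statement's English description precedes it below -/
import Mathlib

section
/- The hard-core scattering integral of Baker and Gammel satisfies ∫_0^∞ ((sin t - t cos t)/t^3)^2 dt = π/15; equivalently, the function S(x) = ∫_0^x ((sin t)/t^3 - (cos t)/t^2)^2 dt tends to π/15 as x → ∞. -/
open Filter Topology Real MeasureTheory Set

set_option linter.unusedVariables false
set_option linter.deprecated false

lemma tendsto_pow_exp {s : ℝ} (hs : 0 < s) (n : ℕ) :
    Tendsto (fun t : ℝ => t ^ n * Real.exp (-(s * t))) atTop (𝓝 0) := by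
  have h1 : Tendsto (fun t : ℝ => s * t) atTop atTop := tendsto_id.const_mul_atTop hs
  have h2 := (Real.tendsto_pow_mul_exp_neg_atTop_nhds_zero n).comp h1
  have h3 := h2.const_mul ((1:ℝ)/s^n)
  rw [mul_zero] at h3
  refine h3.congr (fun t => ?_)
  simp only [Function.comp]
  rw [mul_pow]
  field_simp

lemma tendsto_term {s : ℝ} (hs : 0 < s) (c : ℝ) (n : ℕ) (B : ℝ → ℝ) (hB : ∀ t, |B t| ≤ 1) :
    Tendsto (fun t : ℝ => c * t ^ n * Real.exp (-(s * t)) * B t) atTop (𝓝 0) := by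
  have hg := (tendsto_pow_exp hs n).const_mul |c|
  rw [mul_zero] at hg
  apply squeeze_zero_norm' _ hg
  filter_upwards [eventually_ge_atTop (0:ℝ)] with t ht
  have h1 : |c * t ^ n * Real.exp (-(s * t)) * B t| ≤ |c| * (t ^ n * Real.exp (-(s * t))) := by
    rw [abs_mul, abs_mul, abs_mul]
    have h2 : |t ^ n| = t ^ n := abs_of_nonneg (pow_nonneg ht n)
    have h3 : |Real.exp (-(s*t))| = Real.exp (-(s*t)) := abs_of_nonneg (Real.exp_pos _).le
    rw [h2, h3]
    calc |c| * t ^ n * Real.exp (-(s*t)) * |B t| ≤ |c| * t ^ n * Real.exp (-(s*t)) * 1 := by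
          apply mul_le_mul_of_nonneg_left (hB t); positivity
      _ = |c| * (t ^ n * Real.exp (-(s*t))) := by ring
  exact h1



noncomputable def Gaux (s t : ℝ) : ℝ :=
  Real.exp (-(s*t)) * ( (-(t^2/(2*s)) - t/s^2 - (1/s^3 + 1/(2*s)))
    + (-(s*t^2)/(2*(s^2+4)) + (1/(s^2+4) + 8/(s^2+4)^2) * t
        + s*(s^4+14*s^2+72)/(2*(s^2+4)^3)) * Real.cos (2*t)
    + (t^2/(s^2+4) + (4*s/(s^2+4)^2 + s/(s^2+4)) * t - (2*s^2+40)/(s^2+4)^3) * Real.sin (2*t) )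

lemma NN_eq (t : ℝ) : (Real.sin t - t * Real.cos t)^2
    = 1/2 + t^2/2 + (t^2/2 - 1/2) * Real.cos (2*t) - t * Real.sin (2*t) := by
  rw [Real.cos_two_mul, Real.sin_two_mul]
  linear_combination Real.sin_sq_add_cos_sq t

lemma Gaux_deriv {s : ℝ} (hs : 0 < s) (t : ℝ) :
    HasDerivAt (Gaux s) ((Real.sin t - t * Real.cos t)^2 * Real.exp (-(s*t))) t := by
  have hs0 : s ≠ 0 := ne_of_gt hs
  have hu : s^2 + 4 ≠ 0 := by positivity
  have hexp : HasDerivAt (fun t : ℝ => Real.exp (-(s*t))) (Real.exp (-(s*t)) * (-s)) t := by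
    have h : HasDerivAt (fun t : ℝ => -(s*t)) (-s) t := by
      simpa using ((hasDerivAt_id t).const_mul (-s))
    exact h.exp
  have h2t : HasDerivAt (fun t : ℝ => 2*t) 2 t := by
    simpa using (hasDerivAt_id t).const_mul 2
  have hcos : HasDerivAt (fun t : ℝ => Real.cos (2*t)) (-Real.sin (2*t) * 2) t := h2t.cos
  have hsin : HasDerivAt (fun t : ℝ => Real.sin (2*t)) (Real.cos (2*t) * 2) t := h2t.sin
  have hP : HasDerivAt (fun t : ℝ => -(t^2/(2*s)) - t/s^2 - (1/s^3 + 1/(2*s)))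
      (-(2*t/(2*s)) - 1/s^2) t := by
    have h1 : HasDerivAt (fun t : ℝ => t^2) (2*t) t := by simpa using hasDerivAt_pow 2 t
    exact (((h1.div_const (2*s)).neg.sub ((hasDerivAt_id t).div_const (s^2))).sub_const
      (1/s^3 + 1/(2*s)))
  have hQ : HasDerivAt (fun t : ℝ => -(s*t^2)/(2*(s^2+4)) + (1/(s^2+4) + 8/(s^2+4)^2) * t
      + s*(s^4+14*s^2+72)/(2*(s^2+4)^3))
      (-(s*(2*t))/(2*(s^2+4)) + (1/(s^2+4) + 8/(s^2+4)^2)) t := by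
    have h1 : HasDerivAt (fun t : ℝ => t^2) (2*t) t := by simpa using hasDerivAt_pow 2 t
    have h2 : HasDerivAt (fun t : ℝ => -(s*t^2)) (-(s*(2*t))) t := by
      exact (h1.const_mul s).neg
    have h3 : HasDerivAt (fun t : ℝ => (1/(s^2+4) + 8/(s^2+4)^2) * t)
        (1/(s^2+4) + 8/(s^2+4)^2) t := by
      simpa only [mul_one, id_eq] using (hasDerivAt_id t).const_mul (1/(s^2+4) + 8/(s^2+4)^2)
    exact ((h2.div_const (2*(s^2+4))).add h3).add_const (s*(s^4+14*s^2+72)/(2*(s^2+4)^3))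
  have hR : HasDerivAt (fun t : ℝ => t^2/(s^2+4) + (4*s/(s^2+4)^2 + s/(s^2+4)) * t
      - (2*s^2+40)/(s^2+4)^3)
      (2*t/(s^2+4) + (4*s/(s^2+4)^2 + s/(s^2+4))) t := by
    have h1 : HasDerivAt (fun t : ℝ => t^2) (2*t) t := by simpa using hasDerivAt_pow 2 t
    have h3 : HasDerivAt (fun t : ℝ => (4*s/(s^2+4)^2 + s/(s^2+4)) * t)
        (4*s/(s^2+4)^2 + s/(s^2+4)) t := by
      simpa only [mul_one, id_eq] using (hasDerivAt_id t).const_mul (4*s/(s^2+4)^2 + s/(s^2+4))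
    exact ((h1.div_const (s^2+4)).add h3).sub_const ((2*s^2+40)/(s^2+4)^3)
  have hIn := (hP.add ((hQ.mul hcos))).add (hR.mul hsin)
  have hG := hexp.mul hIn
  refine hG.congr_deriv ?_
  simp only [Pi.add_apply, Pi.mul_apply]
  rw [NN_eq]
  field_simp
  ring



lemma abs_cos2 : ∀ t : ℝ, |Real.cos (2*t)| ≤ 1 := fun t => Real.abs_cos_le_one _
lemma abs_sin2 : ∀ t : ℝ, |Real.sin (2*t)| ≤ 1 := fun t => Real.abs_sin_le_one _
lemma abs_one' : ∀ _t : ℝ, |(1:ℝ)| ≤ 1 := fun _ => by norm_num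

lemma Gaux_tendsto {s : ℝ} (hs : 0 < s) : Tendsto (Gaux s) atTop (𝓝 0) := by
  have h1 := tendsto_term hs (-(1/(2*s))) 2 (fun _ => 1) abs_one'
  have h2 := tendsto_term hs (-(1/s^2)) 1 (fun _ => 1) abs_one'
  have h3 := tendsto_term hs (-(1/s^3 + 1/(2*s))) 0 (fun _ => 1) abs_one'
  have h4 := tendsto_term hs (-(s/(2*(s^2+4)))) 2 _ abs_cos2
  have h5 := tendsto_term hs (1/(s^2+4) + 8/(s^2+4)^2) 1 _ abs_cos2
  have h6 := tendsto_term hs (s*(s^4+14*s^2+72)/(2*(s^2+4)^3)) 0 _ abs_cos2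
  have h7 := tendsto_term hs (1/(s^2+4)) 2 _ abs_sin2
  have h8 := tendsto_term hs (4*s/(s^2+4)^2 + s/(s^2+4)) 1 _ abs_sin2
  have h9 := tendsto_term hs (-((2*s^2+40)/(s^2+4)^3)) 0 _ abs_sin2
  have H := ((((((((h1.add h2).add h3).add h4).add h5).add h6).add h7).add h8).add h9)
  simp only [add_zero] at H
  refine H.congr (fun t => ?_)
  simp only [Gaux]
  ring

lemma Gaux_zero {s : ℝ} (hs : 0 < s) :
    Gaux s 0 = -(1/s^3 + 1/(2*s)) + s*(s^4+14*s^2+72)/(2*(s^2+4)^3) := by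
  simp [Gaux]

lemma Gaux_cont {s : ℝ} : Continuous (Gaux s) := by
  unfold Gaux; fun_prop

lemma tendsto_term' {t : ℝ} (ht : 0 < t) (c : ℝ) (n : ℕ) :
    Tendsto (fun s : ℝ => c * s ^ n * Real.exp (-(s * t))) atTop (𝓝 0) := by
  have h := tendsto_term ht c n (fun _ => 1) abs_one'
  refine h.congr fun s => ?_
  rw [mul_one, mul_comm t s]

noncomputable def Haux (t s : ℝ) : ℝ :=
  -(Real.exp (-(s*t)) * (s^5/t + 5*s^4/t^2 + 20*s^3/t^3 + 60*s^2/t^4 + 120*s/t^5 + 120/t^6))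

lemma Haux_deriv {t : ℝ} (ht : 0 < t) (s : ℝ) :
    HasDerivAt (Haux t) (s^5 * Real.exp (-(s*t))) s := by
  have ht0 : t ≠ 0 := ne_of_gt ht
  have hexp : HasDerivAt (fun s : ℝ => Real.exp (-(s*t))) (Real.exp (-(s*t)) * (-t)) s := by
    have h : HasDerivAt (fun s : ℝ => -(s*t)) (-t) s := by
      simpa using ((hasDerivAt_id s).mul_const (-t))
    exact h.exp
  have hpoly : HasDerivAt (fun s : ℝ => s^5/t + 5*s^4/t^2 + 20*s^3/t^3 + 60*s^2/t^4
      + 120*s/t^5 + 120/t^6)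
      (5*s^4/t + 5*(4*s^3)/t^2 + 20*(3*s^2)/t^3 + 60*(2*s)/t^4 + 120/t^5) s := by
    have p5 : HasDerivAt (fun s : ℝ => s^5) (5*s^4) s := by simpa using hasDerivAt_pow 5 s
    have p4 : HasDerivAt (fun s : ℝ => 5*s^4) (5*(4*s^3)) s := by
      simpa using (hasDerivAt_pow 4 s).const_mul 5
    have p3 : HasDerivAt (fun s : ℝ => 20*s^3) (20*(3*s^2)) s := by
      simpa using (hasDerivAt_pow 3 s).const_mul 20
    have p2 : HasDerivAt (fun s : ℝ => 60*s^2) (60*(2*s)) s := by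
      simpa using (hasDerivAt_pow 2 s).const_mul 60
    have p1 : HasDerivAt (fun s : ℝ => 120*s) 120 s := by
      simpa using (hasDerivAt_id s).const_mul (120:ℝ)
    exact (((((p5.div_const t).add (p4.div_const (t^2))).add (p3.div_const (t^3))).add
      (p2.div_const (t^4))).add (p1.div_const (t^5))).add_const (120/t^6)
  have hG := (hexp.mul hpoly).neg
  refine hG.congr_deriv ?_
  field_simp
  ring

lemma Haux_tendsto {t : ℝ} (ht : 0 < t) : Tendsto (Haux t) atTop (𝓝 0) := by
  have h1 := tendsto_term' ht (-(1/t)) 5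
  have h2 := tendsto_term' ht (-(5/t^2)) 4
  have h3 := tendsto_term' ht (-(20/t^3)) 3
  have h4 := tendsto_term' ht (-(60/t^4)) 2
  have h5 := tendsto_term' ht (-(120/t^5)) 1
  have h6 := tendsto_term' ht (-(120/t^6)) 0
  have H := ((((h1.add h2).add h3).add h4).add h5).add h6
  simp only [add_zero] at H
  refine H.congr fun s => ?_
  simp only [Haux]
  ring

lemma integral_s_pow_exp {t : ℝ} (ht : 0 < t) :
    (∫ s in Ioi (0:ℝ), s^5 * Real.exp (-(s*t))) = 120 / t^6 := by
  have hc : Continuous (Haux t) := by unfold Haux; fun_prop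
  have h := integral_Ioi_of_hasDerivAt_of_nonneg (a:=0) (g:=Haux t)
    (g':= fun s => s^5 * Real.exp (-(s*t))) hc.continuousWithinAt
    (fun x hx => Haux_deriv ht x) (fun x hx => by
      have : (0:ℝ) < x := hx
      positivity) (Haux_tendsto ht)
  rw [h]
  simp only [Haux]
  norm_num

lemma integrableOn_s_pow_exp {t : ℝ} (ht : 0 < t) :
    IntegrableOn (fun s => s^5 * Real.exp (-(s*t))) (Ioi (0:ℝ)) := by
  have hc : Continuous (Haux t) := by unfold Haux; fun_prop
  exact integrableOn_Ioi_deriv_of_nonneg hc.continuousWithinAt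
    (fun x hx => Haux_deriv ht x) (fun x hx => by
      have : (0:ℝ) < x := hx
      positivity) (Haux_tendsto ht)

noncomputable def Phi (s : ℝ) : ℝ :=
  2/15 * (Real.arctan (s/2) - 3*s/(s^2+4) + 4*s/(s^2+4)^2)

lemma Phi_deriv (s : ℝ) :
    HasDerivAt Phi (2/15 * (5*s^4+4*s^2)/(s^2+4)^3) s := by
  have hu : s^2 + 4 ≠ 0 := by positivity
  have harc : HasDerivAt (fun s : ℝ => Real.arctan (s/2)) ((1/(1+(s/2)^2)) * (1/2)) s := by
    have h : HasDerivAt (fun s : ℝ => s/2) (1/2) s := by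
      simpa using (hasDerivAt_id s).div_const 2
    exact (Real.hasDerivAt_arctan (s/2)).comp s h
  have hden : HasDerivAt (fun s : ℝ => s^2+4) (2*s) s := by
    simpa using (hasDerivAt_pow 2 s).add_const 4
  have h1 : HasDerivAt (fun s : ℝ => 3*s/(s^2+4))
      ((3*(s^2+4) - 3*s*(2*s))/(s^2+4)^2) s := by
    have hn : HasDerivAt (fun s : ℝ => 3*s) 3 s := by
      simpa using (hasDerivAt_id s).const_mul (3:ℝ)
    exact hn.div hden hu
  have hden2 : HasDerivAt (fun s : ℝ => (s^2+4)^2) (2*(s^2+4)*(2*s)) s := by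
    have := (hasDerivAt_pow 2 (s^2+4)).comp s hden
    simpa [mul_comm, mul_assoc, Function.comp_def] using this
  have h2 : HasDerivAt (fun s : ℝ => 4*s/(s^2+4)^2)
      ((4*(s^2+4)^2 - 4*s*(2*(s^2+4)*(2*s)))/((s^2+4)^2)^2) s := by
    have hn : HasDerivAt (fun s : ℝ => 4*s) 4 s := by
      simpa using (hasDerivAt_id s).const_mul (4:ℝ)
    exact hn.div hden2 (by positivity)
  have H := (((harc.sub h1).add h2).const_mul (2/15))
  refine H.congr_deriv ?_
  have h14 : 1 + (s/2)^2 ≠ 0 := by positivity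
  field_simp
  ring

lemma Phi_tendsto : Tendsto Phi atTop (𝓝 (π/15)) := by
  have harc : Tendsto (fun s : ℝ => Real.arctan (s/2)) atTop (𝓝 (π/2)) := by
    exact (Real.tendsto_arctan_atTop.mono_right nhdsWithin_le_nhds).comp
      (tendsto_id.atTop_div_const two_pos)
  have h1 : Tendsto (fun s : ℝ => 3*s/(s^2+4)) atTop (𝓝 0) := by
    have hb : Tendsto (fun s : ℝ => 3/s) atTop (𝓝 0) :=
      tendsto_const_nhds.div_atTop tendsto_id
    apply squeeze_zero_norm' _ hb
    filter_upwards [eventually_ge_atTop (1:ℝ)] with s hs1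
    rw [Real.norm_eq_abs, abs_of_nonneg (by positivity)]
    rw [div_le_div_iff₀ (by positivity) (by positivity)]
    nlinarith
  have h2 : Tendsto (fun s : ℝ => 4*s/(s^2+4)^2) atTop (𝓝 0) := by
    have hb : Tendsto (fun s : ℝ => 4/s) atTop (𝓝 0) :=
      tendsto_const_nhds.div_atTop tendsto_id
    apply squeeze_zero_norm' _ hb
    filter_upwards [eventually_ge_atTop (1:ℝ)] with s hs1
    rw [Real.norm_eq_abs, abs_of_nonneg (by positivity)]
    rw [div_le_div_iff₀ (by positivity) (by positivity)]
    nlinarith [sq_nonneg s, sq_nonneg (s^2-1)]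
  have H := (((harc.sub h1).add h2).const_mul (2/15:ℝ))
  have : (2/15:ℝ) * (π/2 - 0 + 0) = π/15 := by ring
  rw [this] at H
  exact H

lemma integral_Rat : (∫ s in Ioi (0:ℝ), 2/15 * (5*s^4+4*s^2)/(s^2+4)^3) = π/15 := by
  have hc : Continuous Phi := by
    unfold Phi
    have h1 : Continuous fun s : ℝ => 3*s/(s^2+4) :=
      Continuous.div (by fun_prop) (by fun_prop) (fun x => by positivity)
    have h2 : Continuous fun s : ℝ => 4*s/(s^2+4)^2 :=
      Continuous.div (by fun_prop) (by fun_prop) (fun x => by positivity)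
    have h3 : Continuous fun s : ℝ => Real.arctan (s/2) :=
      Real.continuous_arctan.comp (by fun_prop)
    exact (continuous_const.mul ((h3.sub h1).add h2))
  have h := integral_Ioi_of_hasDerivAt_of_nonneg (a:=0) (g:=Phi)
    (g':= fun s => 2/15 * (5*s^4+4*s^2)/(s^2+4)^3) hc.continuousWithinAt
    (fun x _ => Phi_deriv x) (fun x hx => by
      have : (0:ℝ) < x := hx
      positivity) Phi_tendsto
  rw [h]
  simp [Phi]

-- integrability of the main integrand
lemma NN_bound_small {t : ℝ} (h0 : 0 < t) (h1 : t ≤ 1) :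
    |Real.sin t - t * Real.cos t| ≤ t^3 / 2 := by
  rw [abs_le]
  constructor
  · nlinarith [Real.sin_gt_sub_cube h0,
      mul_nonneg h0.le (sub_nonneg.2 (Real.cos_le_one t)), pow_pos h0 3]
  · nlinarith [Real.sin_le h0.le, Real.one_sub_sq_div_two_le_cos (x := t)]

lemma g_meas : AEStronglyMeasurable
    (fun t : ℝ => (Real.sin t - t * Real.cos t)^2 / t^6) volume :=
  (((Real.measurable_sin.sub (measurable_id.mul Real.measurable_cos)).pow_const 2).div
    (measurable_id.pow_const 6)).aestronglyMeasurable

lemma g_cont : ContinuousOn (fun t : ℝ => (Real.sin t - t * Real.cos t)^2 / t^6) (Ioi 0) := by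
  apply ContinuousOn.div (by fun_prop) (by fun_prop)
  intro x hx
  have : (0:ℝ) < x := hx
  positivity

lemma g_integrableOn :
    IntegrableOn (fun t : ℝ => (Real.sin t - t * Real.cos t)^2 / t^6) (Ioi (0:ℝ)) := by
  rw [← Ioc_union_Ioi_eq_Ioi (zero_le_one' ℝ)]
  apply IntegrableOn.union
  · apply Measure.integrableOn_of_bounded (M := 1/4)
    · simp
    · exact g_meas
    · filter_upwards [ae_restrict_mem measurableSet_Ioc] with t ht
      have h0 : (0:ℝ) < t := ht.1
      have hb := NN_bound_small h0 ht.2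
      rw [Real.norm_eq_abs, abs_of_nonneg (by positivity)]
      have h2 : (Real.sin t - t * Real.cos t)^2 ≤ (t^3/2)^2 := by
        rw [← sq_abs]
        exact pow_le_pow_left₀ (abs_nonneg _) hb 2
      rw [div_le_iff₀ (by positivity)]
      nlinarith
  · -- on Ioi 1, dominate by 4 / t^4
    have hmaj : IntegrableOn (fun t : ℝ => 4 / t^4) (Ioi (1:ℝ)) := by
      have hF : ∀ x ∈ Ici (1:ℝ), HasDerivAt (fun t : ℝ => -(4/3/t^3)) (4 / x^4) x := by
        intro x hx
        have hx0 : x ≠ 0 := by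
          have : (1:ℝ) ≤ x := hx
          linarith
        have h := (HasDerivAt.div (hasDerivAt_const x ((4:ℝ)/3)) (hasDerivAt_pow 3 x)
          (pow_ne_zero 3 hx0)).neg
        refine h.congr_deriv ?_
        push_cast
        field_simp
        ring
      have hlim : Tendsto (fun t : ℝ => -(4/3/t^3)) atTop (𝓝 0) := by
        have h1 : Tendsto (fun t : ℝ => (4:ℝ)/3/t^3) atTop (𝓝 0) :=
          tendsto_const_nhds.div_atTop (tendsto_pow_atTop three_ne_zero)
        simpa using h1.neg
      exact integrableOn_Ioi_deriv_of_nonneg' hF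
        (fun x hx => by
          have : (1:ℝ) < x := hx
          positivity) hlim
    apply hmaj.integrable.mono
    · exact g_meas.restrict
    · filter_upwards [ae_restrict_mem measurableSet_Ioi] with t ht
      have h1 : (1:ℝ) < t := ht
      have h0 : (0:ℝ) < t := by linarith
      rw [Real.norm_eq_abs, Real.norm_eq_abs, abs_of_nonneg (by positivity),
        abs_of_nonneg (by positivity)]
      have hb : |Real.sin t - t * Real.cos t| ≤ 2 * t := by
        calc |Real.sin t - t * Real.cos t| ≤ |Real.sin t| + |t * Real.cos t| := abs_sub _ _
          _ ≤ 1 + t * 1 := by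
              gcongr
              · exact Real.abs_sin_le_one t
              · rw [abs_mul, abs_of_nonneg h0.le]
                exact mul_le_mul_of_nonneg_left (Real.abs_cos_le_one t) h0.le
          _ ≤ 2 * t := by linarith
      have h2 : (Real.sin t - t * Real.cos t)^2 ≤ (2*t)^2 := by
        rw [← sq_abs]
        exact pow_le_pow_left₀ (abs_nonneg _) hb 2
      rw [div_le_div_iff₀ (by positivity) (by positivity)]
      nlinarith [mul_le_mul_of_nonneg_right h2 (by positivity : (0:ℝ) ≤ t^4)]

lemma laplace_NN {s : ℝ} (hs : 0 < s) :
    (∫ t in Ioi (0:ℝ), (Real.sin t - t*Real.cos t)^2 * Real.exp (-(s*t)))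
      = 1/s^3 + 1/(2*s) - s*(s^4+14*s^2+72)/(2*(s^2+4)^3) := by
  have h := integral_Ioi_of_hasDerivAt_of_nonneg (a:=0) (g:=Gaux s)
    (g':= fun t => (Real.sin t - t*Real.cos t)^2 * Real.exp (-(s*t)))
    Gaux_cont.continuousWithinAt (fun x _ => Gaux_deriv hs x)
    (fun x _ => by positivity) (Gaux_tendsto hs)
  rw [h, Gaux_zero hs]
  ring

lemma main_integral :
    (∫ t in Ioi (0:ℝ), (Real.sin t - t * Real.cos t)^2 / t^6) = π/15 := by
  set μ := volume.restrict (Ioi (0:ℝ)) with hμ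
  set f : ℝ → ℝ → ℝ :=
    fun t s => (Real.sin t - t*Real.cos t)^2 * (s^5/120 * Real.exp (-(s*t))) with hf
  have hmeas : AEStronglyMeasurable (Function.uncurry f) (μ.prod μ) := by
    apply Continuous.aestronglyMeasurable
    apply Continuous.mul
    · fun_prop
    · fun_prop
  have hint1 : ∀ t ∈ Ioi (0:ℝ), Integrable (fun s => f t s) μ := by
    intro t ht
    exact ((integrableOn_s_pow_exp ht).const_mul ((Real.sin t - t*Real.cos t)^2/120)).congr
      (ae_of_all _ fun s => by simp only [hf]; ring)
  have hval1 : ∀ t ∈ Ioi (0:ℝ),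
      (∫ s in Ioi (0:ℝ), f t s) = (Real.sin t - t * Real.cos t)^2 / t^6 := by
    intro t ht
    have e1 : ∀ s ∈ Ioi (0:ℝ), f t s
        = ((Real.sin t - t*Real.cos t)^2/120) * (s^5 * Real.exp (-(s*t))) := by
      intro s _
      simp only [hf]; ring
    rw [setIntegral_congr_fun measurableSet_Ioi e1, MeasureTheory.integral_const_mul, integral_s_pow_exp ht]
    ring
  have hInt : Integrable (Function.uncurry f) (μ.prod μ) := by
    rw [integrable_prod_iff hmeas]
    constructor
    · filter_upwards [ae_restrict_mem measurableSet_Ioi] with t ht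
      exact hint1 t ht
    · apply g_integrableOn.congr
      filter_upwards [ae_restrict_mem measurableSet_Ioi] with t ht
      have e1 : ∀ s ∈ Ioi (0:ℝ), ‖f t s‖ = f t s := by
        intro s hs
        have hs0 : (0:ℝ) < s := hs
        rw [Real.norm_eq_abs, abs_of_nonneg]
        simp only [hf]
        positivity
      calc (Real.sin t - t * Real.cos t)^2 / t^6 = ∫ s in Ioi (0:ℝ), f t s := (hval1 t ht).symm
        _ = ∫ s in Ioi (0:ℝ), ‖f t s‖ :=
            (setIntegral_congr_fun measurableSet_Ioi e1).symm
  have hswap := integral_integral_swap hInt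
  have hval2 : ∀ s ∈ Ioi (0:ℝ),
      (∫ t in Ioi (0:ℝ), f t s) = 2/15 * (5*s^4+4*s^2)/(s^2+4)^3 := by
    intro s hs
    have hs0 : (0:ℝ) < s := hs
    have e1 : ∀ t ∈ Ioi (0:ℝ), f t s
        = (s^5/120) * ((Real.sin t - t*Real.cos t)^2 * Real.exp (-(s*t))) := by
      intro t _
      simp only [hf]; ring
    rw [setIntegral_congr_fun measurableSet_Ioi e1, MeasureTheory.integral_const_mul, laplace_NN hs0]
    have hu : (s:ℝ)^2 + 4 ≠ 0 := by positivity
    have hs' : (s:ℝ) ≠ 0 := ne_of_gt hs0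
    field_simp
    ring
  calc (∫ t in Ioi (0:ℝ), (Real.sin t - t * Real.cos t)^2 / t^6)
      = ∫ t in Ioi (0:ℝ), ∫ s in Ioi (0:ℝ), f t s := by
        refine (setIntegral_congr_fun measurableSet_Ioi ?_).symm
        intro t ht
        exact hval1 t ht
    _ = ∫ s in Ioi (0:ℝ), ∫ t in Ioi (0:ℝ), f t s := hswap
    _ = ∫ s in Ioi (0:ℝ), 2/15 * (5*s^4+4*s^2)/(s^2+4)^3 :=
        setIntegral_congr_fun measurableSet_Ioi hval2
    _ = π/15 := integral_Rat

/-- The hard-core scattering integral of Baker and Gammel: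
`∫_0^∞ ((sin t - t cos t)/t³)² dt = π/15`; equivalently
`S(x) = ∫_0^x ((sin t)/t³ - (cos t)/t²)² dt` tends to `π/15` as `x → ∞`. -/
theorem hard_core_scattering_integral :
    (∫ t in Set.Ioi (0 : ℝ), ((Real.sin t - t * Real.cos t) / t ^ 3) ^ 2) = Real.pi / 15 ∧
    Tendsto (fun x : ℝ => ∫ t in (0 : ℝ)..x, (Real.sin t / t ^ 3 - Real.cos t / t ^ 2) ^ 2)
      atTop (𝓝 (Real.pi / 15)) := by
  have hfun1 : (fun t : ℝ => ((Real.sin t - t * Real.cos t) / t ^ 3) ^ 2)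
      = fun t : ℝ => (Real.sin t - t * Real.cos t)^2 / t^6 := by
    funext t
    rw [div_pow, ← pow_mul]
  have hfun2 : (fun t : ℝ => (Real.sin t / t ^ 3 - Real.cos t / t ^ 2) ^ 2)
      = fun t : ℝ => (Real.sin t - t * Real.cos t)^2 / t^6 := by
    funext t
    rcases eq_or_ne t 0 with h | h
    · simp [h]
    · field_simp
  constructor
  · rw [show (fun t : ℝ => ((Real.sin t - t * Real.cos t) / t ^ 3) ^ 2)
      = fun t : ℝ => (Real.sin t - t * Real.cos t)^2 / t^6 from hfun1] at *
    exact main_integral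
  · rw [hfun2]
    have h := MeasureTheory.intervalIntegral_tendsto_integral_Ioi 0 g_integrableOn tendsto_id
    rw [main_integral] at h
    exact h
end

section
/- The circular Wilson loop function f(x) = 2 exp(-x) I_1(x)/x, where I_1(x) = Σ_{k≥0} (x/2)^{2k+1}/(k!(k+1)!), satisfies the large-variable asymptotics lim_{x→∞} x^{3/2} f(x) = √(2/π); equivalently, lim_{x→∞} √(2πx) exp(-x) I_1(x) = 1. -/
open Filter Topology Real Set MeasureTheory intervalIntegral Finset

noncomputable section
namespace WilsonLoopAux


lemma prod_id (m : ℕ) : (∏ i ∈ Finset.range m, (2*(i:ℝ)+1)/(2*i+2))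
    = ((2*m).factorial : ℝ) / (4^m * ((m.factorial : ℝ))^2) := by
  induction m with
  | zero => simp
  | succ k ih =>
    rw [Finset.prod_range_succ, ih]
    have h1 : (2*(k+1)) = (2*k+1) + 1 := by ring
    rw [h1, Nat.factorial_succ, Nat.factorial_succ, Nat.factorial_succ]
    have hk : ((k.factorial : ℝ)) ≠ 0 := Nat.cast_ne_zero.mpr k.factorial_ne_zero
    have h2k : (((2*k).factorial : ℝ)) ≠ 0 := Nat.cast_ne_zero.mpr (2*k).factorial_ne_zero
    push_cast
    have h4 : (4:ℝ)^(k+1) = 4 * 4^k := by ring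
    rw [h4]
    field_simp
    ring

lemma integral_cos_pow_even (m : ℕ) :
    (∫ θ in (0:ℝ)..π, Real.cos θ ^ (2*m)) = π * ∏ i ∈ Finset.range m, (2*(i:ℝ)+1)/(2*i+2) := by
  induction m with
  | zero => simp
  | succ k ih =>
    have h : 2*(k+1) = (2*k) + 2 := by ring
    rw [h, integral_cos_pow, ih, Finset.prod_range_succ]
    simp [Real.sin_pi]
    push_cast
    ring

lemma integral_cos_pow_odd (m : ℕ) :
    (∫ θ in (0:ℝ)..π, Real.cos θ ^ (2*m+1)) = 0 := by
  induction m with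
  | zero => simp
  | succ k ih =>
    have h : 2*(k+1)+1 = (2*k+1) + 2 := by ring
    rw [h, integral_cos_pow, ih]
    simp [Real.sin_pi]

lemma integral_cos_pow_mul_sin_sq (n : ℕ) :
    (∫ θ in (0:ℝ)..π, Real.cos θ ^ n * Real.sin θ ^ 2)
      = (∫ θ in (0:ℝ)..π, Real.cos θ ^ n) / ((n:ℝ)+2) := by
  have hrec : (∫ θ in (0:ℝ)..π, Real.cos θ ^ (n+2))
      = ((n:ℝ)+1)/((n:ℝ)+2) * ∫ θ in (0:ℝ)..π, Real.cos θ ^ n := by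
    rw [integral_cos_pow]; simp [Real.sin_pi]
  have h1 : (∫ θ in (0:ℝ)..π, Real.cos θ ^ n * Real.sin θ ^ 2)
      = (∫ θ in (0:ℝ)..π, Real.cos θ ^ n) - ∫ θ in (0:ℝ)..π, Real.cos θ ^ (n+2) := by
    rw [← intervalIntegral.integral_sub (by apply Continuous.intervalIntegrable; fun_prop)
        (by apply Continuous.intervalIntegrable; fun_prop)]
    congr 1; ext θ
    rw [Real.sin_sq]
    ring
  rw [h1, hrec]
  have : ((n:ℝ)+2) ≠ 0 := by positivity
  field_simp
  ring



lemma exp_hasSum (y : ℝ) : HasSum (fun n : ℕ => y^n / n.factorial) (Real.exp y) := by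
  rw [Real.exp_eq_exp_ℝ]
  exact NormedSpace.expSeries_div_hasSum_exp y

lemma interchange (x : ℝ) :
    HasSum (fun n : ℕ => (x^n / n.factorial) * ∫ θ in (0:ℝ)..π, Real.cos θ ^ n * Real.sin θ ^ 2)
      (∫ θ in (0:ℝ)..π, Real.exp (x * Real.cos θ) * Real.sin θ ^ 2) := by
  set f : ℕ → C(ℝ, ℝ) := fun n =>
    ⟨fun θ => (x^n / n.factorial) * (Real.cos θ ^ n * Real.sin θ ^ 2), by fun_prop⟩ with hf
  have hbound : ∀ n θ, |f n θ| ≤ |x|^n / n.factorial := by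
    intro n θ
    have h1 : |Real.cos θ ^ n| ≤ 1 := by
      rw [abs_pow]; exact pow_le_one₀ (abs_nonneg _) (Real.abs_cos_le_one θ)
    have h2 : |Real.sin θ ^ 2| ≤ 1 := by
      rw [abs_pow]; exact pow_le_one₀ (abs_nonneg _) (Real.abs_sin_le_one θ)
    have : |f n θ| = |x^n / n.factorial| * (|Real.cos θ ^ n| * |Real.sin θ ^ 2|) := by
      simp [hf, abs_mul]
    rw [this]
    calc |x^n / n.factorial| * (|Real.cos θ ^ n| * |Real.sin θ ^ 2|)
        ≤ |x^n / n.factorial| * (1 * 1) := by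
          apply mul_le_mul_of_nonneg_left _ (abs_nonneg _)
          exact mul_le_mul h1 h2 (abs_nonneg _) zero_le_one
      _ = |x|^n / n.factorial := by
          rw [mul_one, abs_div, abs_pow]
          simp [Nat.abs_cast]
  have hsum : Summable fun n : ℕ =>
      ‖(f n).restrict (⟨Set.uIcc (0:ℝ) π, isCompact_uIcc⟩ : TopologicalSpace.Compacts ℝ)‖ := by
    apply Summable.of_nonneg_of_le (fun n => norm_nonneg _)
      (fun n => ?_) (Real.summable_pow_div_factorial |x|)
    apply ContinuousMap.norm_le _ (by positivity) |>.mpr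
    intro θ
    exact hbound n θ.1
  have H := intervalIntegral.hasSum_intervalIntegral_of_summable_norm (a := 0) (b := π) hsum
  have heq : ∀ θ : ℝ, (∑' n : ℕ, f n θ) = Real.exp (x * Real.cos θ) * Real.sin θ ^ 2 := by
    intro θ
    have h := (exp_hasSum (x * Real.cos θ)).mul_right (Real.sin θ ^ 2)
    have h2 : (fun n : ℕ => (x * Real.cos θ)^n / n.factorial * Real.sin θ ^ 2)
        = fun n => f n θ := by
      ext n; simp [hf, mul_pow]; ring
    rw [h2] at h
    exact h.tsum_eq
  have H2 : ∀ n : ℕ, (∫ θ in (0:ℝ)..π, f n θ)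
      = (x^n / n.factorial) * ∫ θ in (0:ℝ)..π, Real.cos θ ^ n * Real.sin θ ^ 2 := by
    intro n
    rw [← intervalIntegral.integral_const_mul]
    rfl
  have H3 : (∫ θ in (0:ℝ)..π, ∑' n : ℕ, f n θ)
      = ∫ θ in (0:ℝ)..π, Real.exp (x * Real.cos θ) * Real.sin θ ^ 2 := by
    congr 1; ext θ; exact heq θ
  rw [H3] at H
  exact (funext H2 : (fun n : ℕ => ∫ θ in (0:ℝ)..π, f n θ) = _) ▸ H
lemma series_eq (x : ℝ) :
    (∑' k : ℕ, (x / 2) ^ (2 * k + 1) / ((k.factorial : ℝ) * (((k + 1).factorial : ℝ))))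
      = (x/π) * ∫ θ in (0:ℝ)..π, Real.exp (x * Real.cos θ) * Real.sin θ ^ 2 := by
  have H := (interchange x).mul_left (x/π)
  set g : ℕ → ℝ := fun n => (x/π) *
    ((x^n / n.factorial) * ∫ θ in (0:ℝ)..π, Real.cos θ ^ n * Real.sin θ ^ 2) with hg
  have hodd : ∀ n, n ∉ Set.range (fun k : ℕ => 2*k) → g n = 0 := by
    intro n hn
    have : Odd n := by
      rcases Nat.even_or_odd n with he | ho
      · obtain ⟨m, rfl⟩ := he
        exact absurd ⟨m, (by simp [two_mul] : (fun k : ℕ => 2*k) m = m + m)⟩ hn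
      · exact ho
    obtain ⟨m, rfl⟩ := this
    simp only [hg, integral_cos_pow_mul_sin_sq, integral_cos_pow_odd]
    simp
  have hinj : Function.Injective (fun k : ℕ => 2*k) := fun a b h => by simpa using h
  have Heven : HasSum (fun k : ℕ => g (2*k))
      ((x/π) * ∫ θ in (0:ℝ)..π, Real.exp (x * Real.cos θ) * Real.sin θ ^ 2) :=
    (Function.Injective.hasSum_iff hinj hodd).mpr H
  have hterm : ∀ k : ℕ, g (2*k)
      = (x / 2) ^ (2 * k + 1) / ((k.factorial : ℝ) * (((k + 1).factorial : ℝ))) := by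
    intro k
    simp only [hg, integral_cos_pow_mul_sin_sq, integral_cos_pow_even, prod_id]
    have hfk : ((k.factorial : ℝ)) ≠ 0 := Nat.cast_ne_zero.mpr k.factorial_ne_zero
    have hf2k : (((2*k).factorial : ℝ)) ≠ 0 := Nat.cast_ne_zero.mpr (2*k).factorial_ne_zero
    have hpi : (π : ℝ) ≠ 0 := Real.pi_ne_zero
    have h4 : ((4:ℝ)^k) ≠ 0 := by positivity
    have hden : ((2*k : ℕ):ℝ) + 2 ≠ 0 := by positivity
    rw [Nat.factorial_succ]
    have hx2 : (x/2)^(2*k+1) = x^(2*k+1) / (2 * 4^k) := by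
      rw [div_pow]
      congr 1
      rw [pow_succ, pow_mul]
      norm_num
      ring
    rw [hx2]
    have hxp : x^(2*k+1) = x^(2*k) * x := by rw [pow_succ]
    rw [hxp]
    push_cast
    field_simp
  rw [← (funext hterm : (fun k : ℕ => g (2*k)) = _)]
  exact Heven.tsum_eq


lemma sub1 (x : ℝ) :
    (∫ θ in (0:ℝ)..π, Real.exp (x * (Real.cos θ - 1)) * Real.sin θ ^ 2)
      = ∫ t in (0:ℝ)..1, Real.exp (-(2*x*t^2)) * (8*t^2*Real.sqrt (1-t^2)) := by
  have hg : Continuous (fun t : ℝ => Real.exp (-(2*x*t^2)) * (8*t^2*Real.sqrt (1-t^2))) := by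
    fun_prop
  have hderiv : ∀ θ ∈ Set.uIcc (0:ℝ) π,
      HasDerivAt (fun θ : ℝ => Real.sin (θ/2)) (Real.cos (θ/2) * (1/2)) θ := by
    intro θ _
    have h1 : HasDerivAt (fun θ : ℝ => θ/2) (1/2) θ := (hasDerivAt_id θ).div_const 2
    exact (Real.hasDerivAt_sin (θ/2)).comp θ h1
  have key := intervalIntegral.integral_comp_smul_deriv hderiv
    (by fun_prop : Continuous fun θ : ℝ => Real.cos (θ/2) * (1/2)).continuousOn hg
  simp only [smul_eq_mul] at key
  have h0 : Real.sin ((0:ℝ)/2) = 0 := by norm_num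
  have h1 : Real.sin (π/2) = 1 := Real.sin_pi_div_two
  rw [h0, h1] at key
  rw [← key]
  apply intervalIntegral.integral_congr
  intro θ hθ
  rw [Set.uIcc_of_le Real.pi_pos.le] at hθ
  obtain ⟨hθ0, hθπ⟩ := hθ
  have hhalf : θ/2 ∈ Set.Icc (-(π/2)) (π/2) := by
    constructor <;> [linarith [Real.pi_pos]; linarith]
  have hcosnn : 0 ≤ Real.cos (θ/2) := Real.cos_nonneg_of_mem_Icc hhalf
  have hsq : Real.sqrt (1 - Real.sin (θ/2)^2) = Real.cos (θ/2) := by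
    rw [← Real.cos_sq']
    exact Real.sqrt_sq hcosnn
  have hcosθ : Real.cos θ - 1 = -(2 * Real.sin (θ/2)^2) := by
    have h := Real.cos_two_mul (θ/2)
    rw [show 2*(θ/2) = θ by ring, Real.cos_sq'] at h
    linarith
  have hsinθ : Real.sin θ = 2 * Real.sin (θ/2) * Real.cos (θ/2) := by
    conv_lhs => rw [show θ = 2 * (θ/2) by ring, Real.sin_two_mul]
  show Real.exp (x * (Real.cos θ - 1)) * Real.sin θ ^ 2
    = Real.cos (θ/2) * (1/2) * ((fun t => Real.exp (-(2*x*t^2)) * (8*t^2*Real.sqrt (1-t^2)))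
        ((fun θ => Real.sin (θ/2)) θ))
  simp only
  rw [hsq, hcosθ, hsinθ]
  ring_nf

lemma sub2 {x : ℝ} (hx : 0 < x) :
    (∫ s in (0:ℝ)..Real.sqrt x, 8*s^2*Real.sqrt (1-s^2/x)*Real.exp (-(2*s^2)))
      = Real.sqrt x * x *
        ∫ t in (0:ℝ)..1, Real.exp (-(2*x*t^2)) * (8*t^2*Real.sqrt (1-t^2)) := by
  have hc : Real.sqrt x ≠ 0 := by positivity
  have key := intervalIntegral.integral_comp_mul_left
    (f := fun s => 8*s^2*Real.sqrt (1-s^2/x)*Real.exp (-(2*s^2))) (a := 0) (b := 1) hc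
  simp only [mul_zero, mul_one] at key
  have heq : ∀ t : ℝ, 8*(Real.sqrt x*t)^2*Real.sqrt (1-(Real.sqrt x*t)^2/x)
      * Real.exp (-(2*(Real.sqrt x*t)^2))
      = x * (Real.exp (-(2*x*t^2)) * (8*t^2*Real.sqrt (1-t^2))) := by
    intro t
    have hs : (Real.sqrt x * t)^2 = x * t^2 := by
      rw [mul_pow, Real.sq_sqrt hx.le]
    rw [hs, show x*t^2/x = t^2 by field_simp]
    ring
  rw [funext heq] at key
  rw [intervalIntegral.integral_const_mul] at key
  rw [smul_eq_mul, eq_comm, inv_mul_eq_iff_eq_mul₀ hc] at key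
  rw [key]
  ring



lemma gauss_val : (∫ s in Set.Ioi (0:ℝ), 8*s^2*Real.exp (-(2*s^2))) = Real.sqrt (π/2) := by
  have h1 : (∫ s in Set.Ioi (0:ℝ), ((2:ℝ) * s ^ ((2:ℝ)-1)) •
        ((fun t : ℝ => t ^ ((1/2):ℝ) * Real.exp (-(2*t))) (s ^ (2:ℝ))))
      = ∫ t in Set.Ioi (0:ℝ), t ^ ((1/2):ℝ) * Real.exp (-(2*t)) :=
    MeasureTheory.integral_comp_rpow_Ioi_of_pos (g := fun t : ℝ => t ^ ((1/2):ℝ) * Real.exp (-(2*t))) (p := 2) (by norm_num)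
  have h2 : (∫ t in Set.Ioi (0:ℝ), t ^ ((1/2):ℝ) * Real.exp (-(2*t)))
      = (1/2 : ℝ) ^ ((3/2):ℝ) * Real.Gamma (3/2) := by
    have := Real.integral_rpow_mul_exp_neg_mul_Ioi (a := 3/2) (r := 2)
      (by norm_num) (by norm_num)
    rw [show (3/2 : ℝ) - 1 = 1/2 by norm_num] at this
    simpa using this
  have hG : Real.Gamma (3/2 : ℝ) = Real.sqrt π / 2 := by
    rw [show (3/2 : ℝ) = 1/2 + 1 by norm_num, Real.Gamma_add_one (by norm_num),
      Real.Gamma_one_half_eq]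
    ring
  -- LHS of h1 equals ∫ 2 s^2 exp(-2 s^2)
  have h3 : (∫ s in Set.Ioi (0:ℝ), ((2:ℝ) * s ^ ((2:ℝ)-1)) •
        ((fun t : ℝ => t ^ ((1/2):ℝ) * Real.exp (-(2*t))) (s ^ (2:ℝ))))
      = ∫ s in Set.Ioi (0:ℝ), 2*s^2*Real.exp (-(2*s^2)) := by
    apply MeasureTheory.setIntegral_congr_fun measurableSet_Ioi
    intro s hs
    have hs0 : (0:ℝ) < s := hs
    have hr2 : s ^ ((2:ℝ)) = s^2 := by
      rw [show ((2:ℝ)) = ((2:ℕ):ℝ) by norm_num, Real.rpow_natCast]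
    have hr1 : s ^ ((2:ℝ)-1) = s := by
      rw [show ((2:ℝ)-1) = 1 by norm_num, Real.rpow_one]
    simp only [smul_eq_mul, hr2, hr1]
    have hsq : (s^2 : ℝ) ^ ((1/2):ℝ) = s := by
      rw [show (s^2:ℝ) = s^(2:ℕ) by norm_num, ← Real.rpow_natCast s 2, ← Real.rpow_mul hs0.le]
      norm_num
    rw [hsq]
    ring
  have h4 : (∫ s in Set.Ioi (0:ℝ), 2*s^2*Real.exp (-(2*s^2)))
      = (1/2 : ℝ) ^ ((3/2):ℝ) * (Real.sqrt π / 2) := by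
    rw [← h3, h1, h2, hG]
  have h5 : (∫ s in Set.Ioi (0:ℝ), 8*s^2*Real.exp (-(2*s^2)))
      = 4 * ((1/2 : ℝ) ^ ((3/2):ℝ) * (Real.sqrt π / 2)) := by
    rw [← h4, ← MeasureTheory.integral_const_mul]
    congr 1; ext s; ring
  rw [h5]
  have hhalf : ((1/2 : ℝ)) ^ ((3/2):ℝ) = Real.sqrt (1/8) := by
    rw [show ((3/2):ℝ) = (3 : ℕ) * ((1/2):ℝ) by norm_num,
      Real.rpow_mul (by norm_num), Real.rpow_natCast, ← Real.sqrt_eq_rpow]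
    norm_num
  rw [hhalf]
  rw [show (4:ℝ) * (Real.sqrt (1/8) * (Real.sqrt π/2)) = 2 * Real.sqrt (1/8 * π) by
    rw [Real.sqrt_mul (by norm_num)]; ring]
  rw [show Real.sqrt (π/2) = 2 * Real.sqrt (1/8*π) by
    rw [show (π/2:ℝ) = 2^2 * (1/8*π) by ring, Real.sqrt_mul (by positivity),
      Real.sqrt_sq (by norm_num : (0:ℝ) ≤ 2)]]



lemma bound_integrable : Integrable (fun s : ℝ => 8*s^2*Real.exp (-(2*s^2))) := by
  have h := (integrable_rpow_mul_exp_neg_mul_sq (by norm_num : (0:ℝ) < 2)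
    (by norm_num : (-1:ℝ) < 2))
  have heq : (fun s : ℝ => s ^ (2:ℝ) * Real.exp (-2*s^2))
      = fun s : ℝ => s^2 * Real.exp (-(2*s^2)) := by
    ext s
    rw [show ((2:ℝ)) = ((2:ℕ):ℝ) by norm_num, Real.rpow_natCast, neg_mul]
  rw [heq] at h
  have := h.const_mul 8
  apply this.congr
  filter_upwards with s
  ring

lemma gauss_lim : Tendsto (fun x : ℝ =>
      ∫ s in (0:ℝ)..Real.sqrt x, 8*s^2*Real.sqrt (1-s^2/x)*Real.exp (-(2*s^2)))
    atTop (𝓝 (Real.sqrt (π/2))) := by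
  set φ : ℝ → ℝ → ℝ := fun x => Set.indicator (Set.Ioc (0:ℝ) (Real.sqrt x))
    (fun s => 8*s^2*Real.sqrt (1-s^2/x)*Real.exp (-(2*s^2))) with hφ
  set flim : ℝ → ℝ := Set.indicator (Set.Ioi (0:ℝ))
    (fun s => 8*s^2*Real.exp (-(2*s^2))) with hflim
  have hmain : Tendsto (fun x : ℝ => ∫ s, φ x s) atTop (𝓝 (∫ s, flim s)) := by
    apply MeasureTheory.tendsto_integral_filter_of_dominated_convergence
      (bound := fun s : ℝ => 8*s^2*Real.exp (-(2*s^2)))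
    · filter_upwards with x
      apply AEStronglyMeasurable.indicator _ measurableSet_Ioc
      apply Continuous.aestronglyMeasurable
      fun_prop
    · filter_upwards [eventually_gt_atTop (0:ℝ)] with x hx
      filter_upwards with s
      by_cases hs : s ∈ Set.Ioc (0:ℝ) (Real.sqrt x)
      · rw [hφ]; simp only [Set.indicator_of_mem hs]
        have h1 : Real.sqrt (1-s^2/x) ≤ 1 := by
          apply Real.sqrt_le_one.mpr
          have : 0 ≤ s^2/x := by positivity
          linarith
        have hnn : 0 ≤ 8*s^2*Real.sqrt (1-s^2/x)*Real.exp (-(2*s^2)) := by positivity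
        rw [Real.norm_eq_abs, abs_of_nonneg hnn]
        calc 8*s^2*Real.sqrt (1-s^2/x)*Real.exp (-(2*s^2))
            ≤ 8*s^2*1*Real.exp (-(2*s^2)) := by
              apply mul_le_mul_of_nonneg_right _ (Real.exp_nonneg _)
              apply mul_le_mul_of_nonneg_left h1 (by positivity)
          _ = 8*s^2*Real.exp (-(2*s^2)) := by ring
      · rw [hφ]; simp only [Set.indicator_of_notMem hs]
        simp only [norm_zero]
        positivity
    · exact bound_integrable
    · filter_upwards with s
      by_cases hs : 0 < s
      · have hev : ∀ᶠ x in atTop, φ x s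
            = 8*s^2*Real.sqrt (1-s^2/x)*Real.exp (-(2*s^2)) := by
          filter_upwards [eventually_ge_atTop (s^2)] with x hx
          have hmem : s ∈ Set.Ioc (0:ℝ) (Real.sqrt x) := by
            refine ⟨hs, ?_⟩
            rw [show s = Real.sqrt (s^2) by rw [Real.sqrt_sq hs.le]]
            exact Real.sqrt_le_sqrt hx
          rw [hφ]; simp only [Set.indicator_of_mem hmem]
        have hlim2 : Tendsto (fun x : ℝ =>
            8*s^2*Real.sqrt (1-s^2/x)*Real.exp (-(2*s^2))) atTop
            (𝓝 (8*s^2*Real.exp (-(2*s^2)))) := by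
          have h0 : Tendsto (fun x : ℝ => s^2/x) atTop (𝓝 0) :=
            Tendsto.div_atTop tendsto_const_nhds tendsto_id
          have h1 : Tendsto (fun x : ℝ => 1 - s^2/x) atTop (𝓝 1) := by
            have := tendsto_const_nhds (x := (1:ℝ)) (f := atTop).sub h0
            simpa using this
          have h2 : Tendsto (fun x : ℝ => Real.sqrt (1 - s^2/x)) atTop (𝓝 1) := by
            have := (Real.continuous_sqrt.continuousAt (x := (1:ℝ))).tendsto.comp h1
            simpa [Function.comp_def] using this
          have h3 := (h2.const_mul (8*s^2)).mul_const (Real.exp (-(2*s^2)))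
          simp only [mul_one] at h3
          exact h3
        have : flim s = 8*s^2*Real.exp (-(2*s^2)) := by
          rw [hflim]; simp [Set.indicator_of_mem (Set.mem_Ioi.mpr hs)]
        rw [this]
        exact Tendsto.congr' (by filter_upwards [hev] with x h using h.symm) hlim2
      · have h1 : ∀ x : ℝ, φ x s = 0 := by
          intro x
          rw [hφ]
          apply Set.indicator_of_notMem
          intro hmem
          exact hs hmem.1
        have h2 : flim s = 0 := by
          rw [hflim]
          apply Set.indicator_of_notMem
          simpa using hs
        rw [h2]
        simp only [h1]
        exact tendsto_const_nhds
  have hint : ∀ x : ℝ, (∫ s in (0:ℝ)..Real.sqrt x, 8*s^2*Real.sqrt (1-s^2/x)*Real.exp (-(2*s^2)))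
      = ∫ s, φ x s := by
    intro x
    rw [intervalIntegral.integral_of_le (Real.sqrt_nonneg x), hφ,
      MeasureTheory.integral_indicator measurableSet_Ioc]
  have hval : (∫ s, flim s) = Real.sqrt (π/2) := by
    rw [hflim, MeasureTheory.integral_indicator measurableSet_Ioi]
    exact gauss_val
  rw [← hval]
  exact hmain.congr (fun x => (hint x).symm)


lemma main_lim : Tendsto (fun x : ℝ => Real.sqrt x * Real.exp (-x) *
      (∑' k : ℕ, (x / 2) ^ (2 * k + 1) / ((k.factorial : ℝ) * ((k + 1).factorial : ℝ))))
    atTop (𝓝 (Real.sqrt (π/2) / π)) := by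
  have heq : ∀ᶠ x : ℝ in atTop, Real.sqrt x * Real.exp (-x) *
      (∑' k : ℕ, (x / 2) ^ (2 * k + 1) / ((k.factorial : ℝ) * ((k + 1).factorial : ℝ)))
      = (1/π) * ∫ s in (0:ℝ)..Real.sqrt x, 8*s^2*Real.sqrt (1-s^2/x)*Real.exp (-(2*s^2)) := by
    filter_upwards [eventually_gt_atTop (0:ℝ)] with x hx
    rw [series_eq x]
    have hJ : Real.exp (-x) * ∫ θ in (0:ℝ)..π, Real.exp (x * Real.cos θ) * Real.sin θ ^ 2
        = ∫ θ in (0:ℝ)..π, Real.exp (x * (Real.cos θ - 1)) * Real.sin θ ^ 2 := by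
      rw [← intervalIntegral.integral_const_mul]
      congr 1; ext θ
      rw [← mul_assoc, ← Real.exp_add]
      congr 2
      ring
    rw [show Real.sqrt x * Real.exp (-x) * (x / π *
          ∫ θ in (0:ℝ)..π, Real.exp (x * Real.cos θ) * Real.sin θ ^ 2)
        = (1/π) * (Real.sqrt x * x * (Real.exp (-x) *
          ∫ θ in (0:ℝ)..π, Real.exp (x * Real.cos θ) * Real.sin θ ^ 2)) by ring]
    rw [hJ, sub1, ← sub2 hx]
  have := (gauss_lim.const_mul (1/π)).congr' (by filter_upwards [heq] with x h using h.symm)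
  convert this using 2
  ring

end WilsonLoopAux

open WilsonLoopAux in
/-- The circular Wilson loop function `f(x) = 2 exp (-x) I₁(x)/x`, with
`I₁(x) = Σ_{k≥0} (x/2)^(2k+1)/(k!(k+1)!)`, satisfies
`lim_{x→∞} x^(3/2) f(x) = √(2/π)`; equivalently `lim_{x→∞} √(2πx) exp(-x) I₁(x) = 1`. -/
theorem wilson_loop_large_x :
    Tendsto (fun x : ℝ =>
        x ^ ((3 : ℝ) / 2) *
          (2 * Real.exp (-x)
              * (∑' k : ℕ, (x / 2) ^ (2 * k + 1)
                  / ((k.factorial : ℝ) * ((k + 1).factorial : ℝ))) / x))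
      atTop (𝓝 (Real.sqrt (2 / Real.pi))) ∧
    Tendsto (fun x : ℝ =>
        Real.sqrt (2 * Real.pi * x) * Real.exp (-x)
          * (∑' k : ℕ, (x / 2) ^ (2 * k + 1)
              / ((k.factorial : ℝ) * ((k + 1).factorial : ℝ))))
      atTop (𝓝 1) := by
  have hπ : (0:ℝ) < π := Real.pi_pos
  constructor
  · have h1 : Real.sqrt (2/π) = 2 * (Real.sqrt (π/2) / π) := by
      rw [show (2/π : ℝ) = (2 * (Real.sqrt (π/2) / π))^2 by
        rw [mul_pow, div_pow, Real.sq_sqrt (by positivity : (0:ℝ) ≤ π/2)]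
        field_simp]
      exact Real.sqrt_sq (by positivity)
    rw [h1]
    apply (main_lim.const_mul 2).congr'
    filter_upwards [eventually_gt_atTop (0:ℝ)] with x hx
    rw [show x ^ ((3:ℝ)/2) = x * Real.sqrt x by
      rw [show ((3:ℝ)/2) = 1 + (1/2 : ℝ) by norm_num, Real.rpow_add hx, Real.rpow_one,
        ← Real.sqrt_eq_rpow]]
    field_simp
  · have h2 : Real.sqrt (2*π) * (Real.sqrt (π/2) / π) = 1 := by
      rw [show Real.sqrt (2*π) * (Real.sqrt (π/2)/π) = (Real.sqrt (2*π) * Real.sqrt (π/2))/π by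
          ring,
        ← Real.sqrt_mul (by positivity) (π/2), show (2*π)*(π/2) = π^2 by ring,
        Real.sqrt_sq hπ.le]
      field_simp
    rw [← h2]
    apply (main_lim.const_mul (Real.sqrt (2*π))).congr'
    filter_upwards [eventually_gt_atTop (0:ℝ)] with x hx
    rw [show (2*π*x : ℝ) = (2*π)*x by ring, Real.sqrt_mul (by positivity) x]
    ring
end
end

section
/- The third-order self-similar root approximant K(x) = x · (16x^6/63 + (32x^4/45 + 4x^2/3 + 1)^{3/2})^{-1/6} reproduces the small-variable expansion of the error-function integral F(x) = ∫_0^x exp(-u^2) du through fifth order: K(x) = x - x^3/3 + x^5/10 + O(x^7) as x → 0. -/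
open Filter Topology Real Asymptotics

noncomputable section RootApprox

def qq (x : ℝ) : ℝ := 32 * x ^ 4 / 45 + 4 * x ^ 2 / 3 + 1

def sg (x : ℝ) : ℝ := (1 : ℝ) + (2/3 : ℝ) * x^2 + (2/15 : ℝ) * x^4 + (-4/45 : ℝ) * x^6 + (352/2025 : ℝ) * x^8 + (256/2025 : ℝ) * x^10 + (2048/91125 : ℝ) * x^12

def RR (x : ℝ) : ℝ := (-20/81 : ℝ) + (-112/243 : ℝ) * x^2 + (-976/3645 : ℝ) * x^4 + (-1792/54675 : ℝ) * x^6 + (-11264/820125 : ℝ) * x^8 + (-32768/820125 : ℝ) * x^10 + (-4390912/184528125 : ℝ) * x^12 + (-1048576/184528125 : ℝ) * x^14 + (-4194304/8303765625 : ℝ) * x^16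

def UU (x : ℝ) : ℝ := (-1/7 : ℝ) + (391/11340 : ℝ) * x^2 + (-1313/3402 : ℝ) * x^4 + (90827/255150 : ℝ) * x^6 + (-32729/153090 : ℝ) * x^8 + (799507/18370800 : ℝ) * x^10 + (641491/68890500 : ℝ) * x^12 + (-63816457/5166787500 : ℝ) * x^14 + (6781001/2480058000 : ℝ) * x^16 + (13758341/29760696000 : ℝ) * x^18 + (-702646453/1116026100000 : ℝ) * x^20 + (2795954251/16740391500000 : ℝ) * x^22 + (-664523/186004350000 : ℝ) * x^24 + (-942877/55358437500 : ℝ) * x^26 + (18404/2767921875 : ℝ) * x^28 + (-2368/1537734375 : ℝ) * x^30 + (512/2562890625 : ℝ) * x^32 + (-1024/64072265625 : ℝ) * x^34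

def PP (x : ℝ) : ℝ := 1 - x ^ 2 / 3 + x ^ 4 / 10

def ss (x : ℝ) : ℝ := Real.sqrt (qq x)

def AA (x : ℝ) : ℝ := 16 * x ^ 6 / 63 + qq x ^ ((3 : ℝ) / 2)

def cc (x : ℝ) : ℝ := AA x ^ (-(1 / 6 : ℝ))

def TT (x : ℝ) : ℝ :=
  cc x ^ 5 + cc x ^ 4 * PP x + cc x ^ 3 * PP x ^ 2 + cc x ^ 2 * PP x ^ 3
    + cc x * PP x ^ 4 + PP x ^ 5

def EE (x : ℝ) : ℝ := x ^ 6 - (x * PP x) ^ 6 * AA x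

lemma qq_pos (x : ℝ) : 0 < qq x := by unfold qq; positivity

lemma AA_pos (x : ℝ) : 0 < AA x := by
  have h := Real.rpow_pos_of_pos (qq_pos x) ((3:ℝ)/2)
  unfold AA; positivity

lemma hq32 (x : ℝ) : qq x ^ ((3 : ℝ) / 2) = qq x * ss x := by
  rw [show (3:ℝ)/2 = 1 + 1/2 by norm_num, Real.rpow_add (qq_pos x), Real.rpow_one,
    ← Real.sqrt_eq_rpow, ss]

lemma key_poly (x : ℝ) :
    x ^ 6 - (x * PP x) ^ 6 * (16 * x ^ 6 / 63 + qq x * sg x) = x ^ 12 * UU x := by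
  unfold PP qq sg UU; ring

lemma sq_poly (x : ℝ) : qq x - sg x ^ 2 = x ^ 8 * RR x := by
  unfold qq sg RR; ring

lemma AA_zero : AA 0 = 1 := by
  have : qq 0 = 1 := by norm_num [qq]
  simp [AA, this]

lemma cont_qq : Continuous qq := by unfold qq; fun_prop

lemma cont_PP : Continuous PP := by unfold PP; fun_prop

lemma contAt_AA : ContinuousAt AA 0 := by
  have h1 : ContinuousAt (fun x => qq x ^ ((3:ℝ)/2)) 0 :=
    cont_qq.continuousAt.rpow_const (Or.inr (by norm_num))
  exact (by fun_prop : ContinuousAt (fun x : ℝ => 16 * x ^ 6 / 63) 0).add h1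

lemma contAt_cc : ContinuousAt cc 0 :=
  contAt_AA.rpow_const (Or.inl (by rw [AA_zero]; norm_num))

lemma cc_zero : cc 0 = 1 := by simp [cc, AA_zero]

lemma contAt_ss : ContinuousAt ss 0 := (Real.continuous_sqrt.comp cont_qq).continuousAt

lemma ss_zero : ss 0 = 1 := by norm_num [ss, qq]

lemma cc_pow_six (x : ℝ) : cc x ^ 6 * AA x = 1 := by
  rw [cc, ← Real.rpow_natCast (AA x ^ _) 6, ← Real.rpow_mul (AA_pos x).le]
  norm_num
  rw [Real.rpow_neg_one]
  exact inv_mul_cancel₀ (AA_pos x).ne'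

lemma ss_sub_sg : (fun x => ss x - sg x) =O[𝓝 0] fun x : ℝ => x ^ 8 := by
  have hsum : Tendsto (fun x => ss x + sg x) (𝓝 0) (𝓝 2) := by
    have h : ContinuousAt (fun x => ss x + sg x) 0 :=
      contAt_ss.add (by unfold sg; fun_prop)
    have h0 : ss 0 + sg 0 = 2 := by rw [ss_zero]; norm_num [sg]
    simpa [h0] using h.tendsto
  have hne : ∀ᶠ x in 𝓝 0, ss x + sg x ≠ 0 := by
    filter_upwards [hsum.eventually (eventually_gt_nhds (by norm_num : (1:ℝ) < 2))] with x hx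
    linarith
  have heq : (fun x => ss x - sg x) =ᶠ[𝓝 0]
      fun x => x ^ 8 * (RR x / (ss x + sg x)) := by
    filter_upwards [hne] with x hx
    have h2 : (ss x - sg x) * (ss x + sg x) = x ^ 8 * RR x := by
      have hs : ss x ^ 2 = qq x := Real.sq_sqrt (qq_pos x).le
      linear_combination hs + sq_poly x
    have h3 : ss x - sg x = x ^ 8 * RR x / (ss x + sg x) := by
      rw [eq_div_iff hx]; exact h2
    rw [h3, mul_div_assoc]
  have hb : Tendsto (fun x => RR x / (ss x + sg x)) (𝓝 0) (𝓝 (RR 0 / 2)) :=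
    Tendsto.div ((by unfold RR; fun_prop : Continuous RR).continuousAt) hsum (by norm_num)
  have hO : (fun x => x ^ 8 * (RR x / (ss x + sg x))) =O[𝓝 0] fun x : ℝ => x ^ 8 := by
    simpa using (isBigO_refl (fun x : ℝ => x ^ 8) _).mul (hb.isBigO_one ℝ)
  exact heq.trans_isBigO hO

lemma EE_bigO : EE =O[𝓝 0] fun x : ℝ => x ^ 12 := by
  have hdecomp : ∀ x, EE x = x ^ 12 * UU x - (x * PP x) ^ 6 * qq x * (ss x - sg x) := by
    intro x
    unfold EE AA
    rw [hq32]
    linear_combination key_poly x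
  have h1 : (fun x => x ^ 12 * UU x) =O[𝓝 0] fun x : ℝ => x ^ 12 := by
    have hU : Tendsto UU (𝓝 0) (𝓝 (UU 0)) := (by unfold UU; fun_prop : Continuous UU).continuousAt
    simpa using (isBigO_refl (fun x : ℝ => x ^ 12) _).mul (hU.isBigO_one ℝ)
  have h2 : (fun x => (x * PP x) ^ 6 * qq x * (ss x - sg x)) =O[𝓝 0] fun x : ℝ => x ^ 12 := by
    have ha : (fun x => (x * PP x) ^ 6 * qq x) =O[𝓝 0] fun x : ℝ => x ^ 4 := by
      have ht : Tendsto (fun x : ℝ => x ^ 2 * PP x ^ 6 * qq x) (𝓝 0)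
          (𝓝 (0 ^ 2 * PP 0 ^ 6 * qq 0)) :=
        ((continuous_pow 2).mul (cont_PP.pow 6)).mul cont_qq |>.continuousAt
      calc (fun x => (x * PP x) ^ 6 * qq x)
          = fun x => x ^ 4 * (x ^ 2 * PP x ^ 6 * qq x) := by funext x; ring
        _ =O[𝓝 0] fun x : ℝ => x ^ 4 := by
            simpa using (isBigO_refl (fun x : ℝ => x ^ 4) _).mul (ht.isBigO_one ℝ)
    have := ha.mul ss_sub_sg
    simpa [← pow_add] using this
  calc EE = fun x => x ^ 12 * UU x - (x * PP x) ^ 6 * qq x * (ss x - sg x) := funext hdecomp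
    _ =O[𝓝 0] fun x : ℝ => x ^ 12 := h1.sub h2

/-- The third-order self-similar root approximant
`K(x) = x (16x⁶/63 + (32x⁴/45 + 4x²/3 + 1)^(3/2))^(-1/6)` reproduces the small-variable
expansion of the error-function integral through fifth order:
`K(x) = x - x³/3 + x⁵/10 + O(x⁷)` as `x → 0`. -/
theorem root_approximant_error_function :
    (fun x : ℝ =>
        x * (16 * x ^ 6 / 63
              + (32 * x ^ 4 / 45 + 4 * x ^ 2 / 3 + 1) ^ ((3 : ℝ) / 2)) ^ (-(1 / 6 : ℝ))
          - (x - x ^ 3 / 3 + x ^ 5 / 10))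
      =O[𝓝 0] fun x : ℝ => x ^ 7 := by
  have hfK : (fun x : ℝ => x * (16 * x ^ 6 / 63
      + (32 * x ^ 4 / 45 + 4 * x ^ 2 / 3 + 1) ^ ((3 : ℝ) / 2)) ^ (-(1 / 6 : ℝ))
      - (x - x ^ 3 / 3 + x ^ 5 / 10)) = fun x => x * cc x - x * PP x := by
    funext x; unfold cc AA qq PP; ring
  rw [hfK, ← nhdsNE_sup_pure (0:ℝ)]
  refine IsBigO.sup ?_ ?_
  · -- punctured neighborhood
    have hT : Tendsto TT (𝓝 0) (𝓝 6) := by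
      have hTc : ContinuousAt TT 0 := by
        unfold TT
        exact (((((contAt_cc.pow 5).add ((contAt_cc.pow 4).mul cont_PP.continuousAt)).add
          ((contAt_cc.pow 3).mul (cont_PP.pow 2).continuousAt)).add
          ((contAt_cc.pow 2).mul (cont_PP.pow 3).continuousAt)).add
          (contAt_cc.mul (cont_PP.pow 4).continuousAt)).add (cont_PP.pow 5).continuousAt
      have hT0 : TT 0 = 6 := by norm_num [TT, cc_zero, PP]
      simpa [hT0] using hTc.tendsto
    have hTne : ∀ᶠ x in 𝓝[≠] (0:ℝ), TT x ≠ 0 := by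
      filter_upwards [nhdsWithin_le_nhds
        (hT.eventually (eventually_gt_nhds (by norm_num : (5:ℝ) < 6)))] with x hx
      linarith
    have heq : (fun x : ℝ => x * cc x - x * PP x) =ᶠ[𝓝[≠] (0:ℝ)]
        fun x => EE x / x ^ 12 * (1 / (AA x * TT x)) * x ^ 7 := by
      filter_upwards [hTne, self_mem_nhdsWithin] with x hTx hx0
      have hx : x ≠ 0 := hx0
      have hA := (AA_pos x).ne'
      have hmain : (x * cc x - x * PP x) * (x ^ 5 * TT x * AA x) = EE x := by
        rw [TT, EE]
        linear_combination x ^ 6 * cc_pow_six x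
      have hden : x ^ 5 * TT x * AA x ≠ 0 :=
        mul_ne_zero (mul_ne_zero (pow_ne_zero _ hx) hTx) hA
      have h4 : x * cc x - x * PP x = EE x / (x ^ 5 * TT x * AA x) := by
        rw [eq_div_iff hden]; exact hmain
      rw [h4]
      field_simp
    have h1 : (fun x => EE x / x ^ 12) =O[𝓝[≠] (0:ℝ)] (fun _ => (1:ℝ)) := by
      obtain ⟨C, hC⟩ := EE_bigO.bound
      rw [isBigO_iff]
      refine ⟨C, ?_⟩
      filter_upwards [nhdsWithin_le_nhds hC, self_mem_nhdsWithin] with x hx hx0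
      have hx0 : x ≠ 0 := hx0
      have hpos : (0:ℝ) < ‖x ^ 12‖ := norm_pos_iff.mpr (pow_ne_zero _ hx0)
      calc ‖EE x / x ^ 12‖ = ‖EE x‖ / ‖x ^ 12‖ := norm_div _ _
        _ ≤ C := by rw [div_le_iff₀ hpos]; exact hx
        _ = C * ‖(1:ℝ)‖ := by simp
    have hAt : Tendsto AA (𝓝 0) (𝓝 1) := by
      simpa [AA_zero] using contAt_AA.tendsto
    have hprod : Tendsto (fun x : ℝ => AA x * TT x) (𝓝 0) (𝓝 6) := by
      simpa using hAt.mul hT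
    have h2 : Tendsto (fun x : ℝ => 1 / (AA x * TT x)) (𝓝[≠] (0:ℝ)) (𝓝 (1/6)) :=
      (tendsto_const_nhds.div hprod (by norm_num)).mono_left nhdsWithin_le_nhds
    have hO : (fun x : ℝ => EE x / x ^ 12 * (1 / (AA x * TT x)) * x ^ 7)
        =O[𝓝[≠] (0:ℝ)] fun x : ℝ => x ^ 7 := by
      simpa using (h1.mul (h2.isBigO_one ℝ)).mul (isBigO_refl (fun x : ℝ => x ^ 7) _)
    exact heq.trans_isBigO hO
  · rw [isBigO_pure]
    intro _
    norm_num [cc_zero, PP]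

end RootApprox
end

section
/- Large-variable asymptotics of self-similar root approximants: let k ≥ 2, let A ≠ 0, α, s and A_1, …, A_k be real numbers, and define recursively y_1(x) = (1 + A_1 x)^2 + A_2 x^2 and, for 2 ≤ j ≤ k-1, y_j(x) = y_{j-1}(x)^{(j+1)/j} + A_{j+1} x^{j+1}, and the root approximant R_k(x) = A x^{α} · y_{k-1}(x)^{(s-α)/k}. Define constants d_1 = A_1^2 + A_2 and d_j = d_{j-1}^{(j+1)/j} + A_{j+1} for 2 ≤ j ≤ k-1. If d_j > 0 for all 1 ≤ j ≤ k-1 (and, so that all real powers are taken of positive bases, y_j(x) > 0 for all sufficiently large x), then lim_{x→∞} R_k(x)/x^s = A · d_{k-1}^{(s-α)/k}; that is, R_k(x) ≃ B_k x^s as x → ∞ with amplitude B_k = A · ((…((A_1^2 + A_2)^{3/2} + A_3)^{4/3} + … + A_k))^{(s-α)/k}. -/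
open Filter Topology Real

/-- Large-variable asymptotics of self-similar root approximants: for `k ≥ 2`, with
`y₁(x) = (1 + A₁x)² + A₂x²`, `y_j(x) = y_{j-1}(x)^((j+1)/j) + A_{j+1} x^(j+1)` for
`2 ≤ j ≤ k-1`, the root approximant `R_k(x) = A x^α y_{k-1}(x)^((s-α)/k)`, and the nested
constants `d₁ = A₁² + A₂`, `d_j = d_{j-1}^((j+1)/j) + A_{j+1}`, if all `d_j > 0` and
`y_j(x) > 0` for sufficiently large `x`, then
`lim_{x→∞} R_k(x)/x^s = A d_{k-1}^((s-α)/k)`. -/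
theorem root_approximant_large_x_amplitude
    (k : ℕ) (hk : 2 ≤ k) (A α s : ℝ) (hA : A ≠ 0)
    (c : ℕ → ℝ) (y : ℕ → ℝ → ℝ) (d : ℕ → ℝ)
    (hy1 : ∀ x : ℝ, y 1 x = (1 + c 1 * x) ^ 2 + c 2 * x ^ 2)
    (hyj : ∀ j : ℕ, 2 ≤ j → j ≤ k - 1 → ∀ x : ℝ,
      y j x = (y (j - 1) x) ^ (((j : ℝ) + 1) / (j : ℝ)) + c (j + 1) * x ^ (j + 1))
    (hd1 : d 1 = (c 1) ^ 2 + c 2)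
    (hdj : ∀ j : ℕ, 2 ≤ j → j ≤ k - 1 →
      d j = (d (j - 1)) ^ (((j : ℝ) + 1) / (j : ℝ)) + c (j + 1))
    (hdpos : ∀ j : ℕ, 1 ≤ j → j ≤ k - 1 → 0 < d j)
    (hypos : ∀ j : ℕ, 1 ≤ j → j ≤ k - 1 → ∀ᶠ x : ℝ in atTop, 0 < y j x) :
    Tendsto (fun x : ℝ => (A * x ^ α * (y (k - 1) x) ^ ((s - α) / (k : ℝ))) / x ^ s)
      atTop (𝓝 (A * (d (k - 1)) ^ ((s - α) / (k : ℝ)))) := by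
  have key : ∀ j : ℕ, 1 ≤ j → j ≤ k - 1 →
      Tendsto (fun x : ℝ => y j x / x ^ (j + 1)) atTop (𝓝 (d j)) := by
    intro j hj1
    induction j, hj1 using Nat.le_induction with
    | base =>
      intro _
      have h0 : Tendsto (fun x : ℝ => (x⁻¹ + c 1) ^ 2 + c 2) atTop
          (𝓝 ((0 + c 1) ^ 2 + c 2)) := by
        exact (((tendsto_inv_atTop_zero.add tendsto_const_nhds).pow 2).add
          tendsto_const_nhds)
      rw [hd1]
      simp only [zero_add] at h0
      refine Tendsto.congr' ?_ h0
      filter_upwards [eventually_gt_atTop (0 : ℝ)] with x hx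
      rw [hy1]
      field_simp
      ring
    | succ j hj1 ih =>
      intro hjk
      have hjk' : j ≤ k - 1 := by omega
      have hdj' : 0 < d j := hdpos j hj1 hjk'
      set r : ℝ := ((j : ℝ) + 1 + 1) / ((j : ℝ) + 1) with hr
      have hcont : Tendsto (fun t : ℝ => t ^ r + c (j + 2)) (𝓝 (d j))
          (𝓝 (d j ^ r + c (j + 2))) :=
        ((Real.continuousAt_rpow_const _ _ (Or.inl hdj'.ne')).tendsto).add
          tendsto_const_nhds
      have hlim := hcont.comp (ih hjk')
      have hdval : d (j + 1) = d j ^ r + c (j + 2) := by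
        have := hdj (j + 1) (by omega) hjk
        simpa [hr] using this
      rw [hdval]
      refine Tendsto.congr' ?_ hlim
      filter_upwards [eventually_gt_atTop (0 : ℝ), hypos j hj1 hjk'] with x hx hyx
      have hyval := hyj (j + 1) (by omega) hjk x
      simp only [Nat.add_sub_cancel] at hyval
      have hxp : (0 : ℝ) < x ^ (j + 1) := pow_pos hx _
      have hpow : (y j x / x ^ (j + 1)) ^ r = y j x ^ r / x ^ (j + 2) := by
        rw [Real.div_rpow hyx.le (le_of_lt hxp)]
        congr 1
        rw [← Real.rpow_natCast x (j + 1), ← Real.rpow_natCast x (j + 2),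
          ← Real.rpow_mul hx.le]
        congr 1
        have h1 : ((j : ℝ) + 1) ≠ 0 := by positivity
        rw [hr]
        push_cast
        field_simp
        ring
      simp only [Function.comp, hpow, hyval]
      push_cast
      rw [add_div]
      congr 1
      rw [mul_div_assoc, div_self (ne_of_gt (pow_pos hx (j + 2))), mul_one]
  have hk1 : 1 ≤ k - 1 := by omega
  have hkey := key (k - 1) hk1 le_rfl
  have hksub : (k - 1) + 1 = k := by omega
  rw [hksub] at hkey
  have hdk : 0 < d (k - 1) := hdpos (k - 1) hk1 le_rfl
  have hcont : Tendsto (fun t : ℝ => A * t ^ ((s - α) / (k : ℝ))) (𝓝 (d (k - 1)))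
      (𝓝 (A * d (k - 1) ^ ((s - α) / (k : ℝ)))) :=
    tendsto_const_nhds.mul ((Real.continuousAt_rpow_const _ _ (Or.inl hdk.ne')).tendsto)
  refine Tendsto.congr' ?_ (hcont.comp hkey)
  filter_upwards [eventually_gt_atTop (0 : ℝ), hypos (k - 1) hk1 le_rfl] with x hx hyx
  have hxk : (0 : ℝ) < x ^ k := pow_pos hx _
  have hkne : (k : ℝ) ≠ 0 := by positivity
  have hpow : (y (k - 1) x / x ^ k) ^ ((s - α) / (k : ℝ)) =
      y (k - 1) x ^ ((s - α) / (k : ℝ)) / x ^ (s - α) := by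
    rw [Real.div_rpow hyx.le hxk.le]
    congr 1
    rw [← Real.rpow_natCast x k, ← Real.rpow_mul hx.le]
    congr 1
    field_simp
  simp only [Function.comp, hpow]
  rw [Real.rpow_sub hx]
  field_simp
end
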